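/- For every n ≥ 1: ‖p_n‖₂ ≤ ‖s_n‖₂ ≤ C‖p_{n−1}‖₂, and (1 + χ·C^{−2})·‖p_n‖₂² ≤ ‖s_n‖_S² ≤ (C² + χ)·‖p_{n−1}‖₂². -/
import Mathlib


open Filter RealInnerProductSpace

variable {H : Type*} [NormedAddCommGroup H] [InnerProductSpace ℝ H]

/-- `Wlt P n` is the span of `P 0, …, P (n-1)`; thus `Wlt P 0 = ⊥ = W_{-1}` and
`Wlt P (n+1)` is the space `W_n = span{P_0, …, P_n}`. -/
def Wlt (P : ℕ → H) (n : ℕ) : Submodule ℝ H := Submodule.span ℝ (P '' Set.Iio n)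

/-- `Wtot P` is the space `W = ⋃ₙ Wₙ` of all polynomials. -/
def Wtot (P : ℕ → H) : Submodule ℝ H := Submodule.span ℝ (Set.range P)

/-- The Sobolev inner product `⟨f, g⟩_S = ⟨f, g⟩₂ + χ⟨Δf, Δg⟩₂`. -/
noncomputable def innerS (Δ : H →ₗ[ℝ] H) (χ : ℝ) (f g : H) : ℝ :=
  ⟪ f, g ⟫ + χ * ⟪ Δ f, Δ g ⟫

/-- The Sobolev norm `‖f‖_S = √(‖f‖₂² + χ‖Δf‖₂²)`. -/
noncomputable def normS (Δ : H →ₗ[ℝ] H) (χ : ℝ) (f : H) : ℝ :=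
  Real.sqrt (‖f‖ ^ 2 + χ * ‖Δ f‖ ^ 2)

lemma Wlt_mono (P : ℕ → H) {m n : ℕ} (h : m ≤ n) : Wlt P m ≤ Wlt P n :=
  Submodule.span_mono (Set.image_mono fun _ hx => lt_of_lt_of_le hx h)

lemma Wlt_le_Wtot (P : ℕ → H) (n : ℕ) : Wlt P n ≤ Wtot P :=
  Submodule.span_mono (Set.image_subset_range _ _)

lemma memP (P : ℕ → H) {i n : ℕ} (h : i < n) : P i ∈ Wlt P n :=
  Submodule.subset_span ⟨i, h, rfl⟩

lemma Wlt_succ (P : ℕ → H) (n : ℕ) :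
    Wlt P (n + 1) = Submodule.span ℝ {P n} ⊔ Wlt P n := by
  have : Set.Iio (n + 1) = insert n (Set.Iio n) := by
    ext i; simp only [Set.mem_Iio, Set.mem_insert_iff, Set.mem_Iio]; omega
  rw [Wlt, this, Set.image_insert_eq, Submodule.span_insert]; rfl

lemma Delta_maps (P : ℕ → H) (Δ : H →ₗ[ℝ] H) (hΔ0 : Δ (P 0) = 0)
    (hΔsucc : ∀ n, Δ (P (n + 1)) = P n) (n : ℕ) :
    ∀ w ∈ Wlt P (n + 1), Δ w ∈ Wlt P n := by
  intro w hw
  induction hw using Submodule.span_induction with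
  | mem x hx =>
    obtain ⟨i, hi, rfl⟩ := hx
    cases i with
    | zero => rw [hΔ0]; exact Submodule.zero_mem _
    | succ k => rw [hΔsucc]; exact memP P (by simpa using hi)
  | zero => rw [map_zero]; exact Submodule.zero_mem _
  | add x y _ _ hx hy => rw [map_add]; exact Submodule.add_mem _ hx hy
  | smul a x _ hx => rw [map_smul]; exact Submodule.smul_mem _ _ hx

lemma ker_lemma (P : ℕ → H) (hP : LinearIndependent ℝ P) (Δ : H →ₗ[ℝ] H)
    (hΔ0 : Δ (P 0) = 0) (hΔsucc : ∀ n, Δ (P (n + 1)) = P n) :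
    ∀ n, ∀ w ∈ Wlt P (n + 1), Δ w = 0 → w ∈ Wlt P 1 := by
  intro n
  induction n with
  | zero => intro w hw _; exact hw
  | succ m ih =>
    intro w hw hΔw
    rw [Wlt_succ] at hw
    obtain ⟨z, hz, w', hw', rfl⟩ := Submodule.mem_sup.mp hw
    obtain ⟨a, rfl⟩ := Submodule.mem_span_singleton.mp hz
    have hsm : a • P m = -(Δ w') := by
      have h0 : a • Δ (P (m + 1)) + Δ w' = 0 := by
        rw [← map_smul, ← map_add]; exact hΔw
      rw [hΔsucc] at h0
      exact eq_neg_of_add_eq_zero_left h0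
    have haz : a = 0 := by
      by_contra ha
      have : P m ∈ Wlt P m := by
        rw [← Submodule.smul_mem_iff _ ha, hsm]
        exact Submodule.neg_mem _ (Delta_maps P Δ hΔ0 hΔsucc m w' hw')
      exact hP.notMem_span_image (by simp) this
    have : a • P (m + 1) + w' = w' := by rw [haz, zero_smul, zero_add]
    rw [this] at hΔw ⊢
    exact ih w' hw' hΔw

lemma min_norm {S : Submodule ℝ H} {q x : H} (horth : ∀ w ∈ S, ⟪q, w⟫ = 0)
    (hx : x - q ∈ S) : ‖q‖ ≤ ‖x‖ := by
  have h1 : q + (x - q) = x := by abel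
  have h2 := norm_add_sq_real q (x - q)
  rw [h1] at h2
  have h3 := horth _ hx
  nlinarith [norm_nonneg (x - q), norm_nonneg q, norm_nonneg x, sq_nonneg (‖x - q‖)]

lemma min_normS {Δ : H →ₗ[ℝ] H} {χ : ℝ} (hχ : 0 ≤ χ) {S : Submodule ℝ H} {q x : H}
    (horth : ∀ w ∈ S, ⟪q, w⟫ + χ * ⟪Δ q, Δ w⟫ = 0)
    (hx : x - q ∈ S) :
    ‖q‖ ^ 2 + χ * ‖Δ q‖ ^ 2 ≤ ‖x‖ ^ 2 + χ * ‖Δ x‖ ^ 2 := by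
  have h1 : q + (x - q) = x := by abel
  have h2 := norm_add_sq_real q (x - q)
  rw [h1] at h2
  have h1' : Δ q + Δ (x - q) = Δ x := by rw [← map_add, h1]
  have h2' := norm_add_sq_real (Δ q) (Δ (x - q))
  rw [h1'] at h2'
  have h3 := horth _ hx
  nlinarith [sq_nonneg (‖x - q‖), sq_nonneg (‖Δ (x - q)‖), mul_nonneg hχ (sq_nonneg (‖Δ (x - q)‖))]

/-- For `n ≥ 1`: `‖p_n‖₂ ≤ ‖s_n‖₂ ≤ C‖p_{n−1}‖₂` and `(1 + χC⁻²)‖p_n‖₂² ≤ ‖s_n‖_S² ≤ (C² + χ)‖p_{n−1}‖₂²`. -/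
theorem statement7
    (P : ℕ → H) (hP : LinearIndependent ℝ P)
    (Δ G : H →ₗ[ℝ] H)
    (hΔ0 : Δ (P 0) = 0) (hΔsucc : ∀ n, Δ (P (n + 1)) = P n)
    (hGsym : ∀ u ∈ Wtot P, ∀ v ∈ Wtot P, ⟪ G u, v ⟫ = ⟪ u, G v ⟫)
    (hGinv : ∀ u ∈ Wtot P, Δ (G u) = u)
    (hGmap : ∀ n, ∀ u ∈ Wlt P (n + 1), G u ∈ Wlt P (n + 2))
    (C : ℝ) (hC : 0 < C)
    (hGbound : ∀ u ∈ Wtot P, ‖G u‖ ≤ C * ‖u‖)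
    (χ : ℝ) (hχ : 0 < χ)
    (p : ℕ → H)
    (hpmonic : ∀ n, p n - P n ∈ Wlt P n)
    (hportho : ∀ n, ∀ w ∈ Wlt P n, ⟪ p n, w ⟫ = 0)
    (s : ℕ → H)
    (hsmonic : ∀ n, s n - P n ∈ Wlt P n)
    (hsortho : ∀ n, ∀ w ∈ Wlt P n, innerS Δ χ (s n) w = 0)
    : ∀ n, 1 ≤ n →
      ‖p n‖ ≤ ‖s n‖ ∧ ‖s n‖ ≤ C * ‖p (n - 1)‖ ∧
      (1 + χ * C⁻¹ ^ 2) * ‖p n‖ ^ 2 ≤ ‖s n‖ ^ 2 + χ * ‖Δ (s n)‖ ^ 2 ∧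
      ‖s n‖ ^ 2 + χ * ‖Δ (s n)‖ ^ 2 ≤ (C ^ 2 + χ) * ‖p (n - 1)‖ ^ 2 := by
  intro n hn
  obtain ⟨m, rfl⟩ : ∃ m, n = m + 1 := ⟨n - 1, (Nat.succ_pred_eq_of_pos hn).symm⟩
  have hm1 : m + 1 - 1 = m := rfl
  rw [hm1]
  -- basic memberships
  have hWbot : Wlt P 0 = ⊥ := by
    have h0 : Set.Iio 0 = (∅ : Set ℕ) := by ext i; simp
    rw [Wlt, h0]; simp
  have hs_mem : s (m + 1) ∈ Wlt P (m + 2) := by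
    have : s (m + 1) = (s (m + 1) - P (m + 1)) + P (m + 1) := by abel
    rw [this]
    exact Submodule.add_mem _ (Wlt_mono P (by omega) (hsmonic (m + 1))) (memP P (by omega))
  have hpm_mem : p m ∈ Wlt P (m + 1) := by
    have : p m = (p m - P m) + P m := by abel
    rw [this]
    exact Submodule.add_mem _ (Wlt_mono P (by omega) (hpmonic m)) (memP P (by omega))
  have hsp_diff : s (m + 1) - p (m + 1) ∈ Wlt P (m + 1) := by
    have : s (m + 1) - p (m + 1) =
        (s (m + 1) - P (m + 1)) - (p (m + 1) - P (m + 1)) := by abel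
    rw [this]
    exact Submodule.sub_mem _ (hsmonic (m + 1)) (hpmonic (m + 1))
  -- fact 1 : ‖p (m+1)‖ ≤ ‖s (m+1)‖
  have fact1 : ‖p (m + 1)‖ ≤ ‖s (m + 1)‖ := min_norm (hportho (m + 1)) hsp_diff
  -- Δ s (m+1) is "monic" : Δ s (m+1) - p m ∈ Wlt P m
  have hΔs_mem : Δ (s (m + 1)) ∈ Wlt P (m + 1) :=
    Delta_maps P Δ hΔ0 hΔsucc (m + 1) _ hs_mem
  have hΔsp : Δ (s (m + 1)) - p m ∈ Wlt P m := by
    have heq : Δ (s (m + 1)) - p m =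
        Δ (s (m + 1) - P (m + 1)) - (p m - P m) := by
      rw [map_sub, hΔsucc]; abel
    rw [heq]
    exact Submodule.sub_mem _ (Delta_maps P Δ hΔ0 hΔsucc m _ (hsmonic (m + 1))) (hpmonic m)
  -- fact : ‖p m‖ ≤ ‖Δ (s (m+1))‖
  have factΔ : ‖p m‖ ≤ ‖Δ (s (m + 1))‖ := min_norm (hportho m) hΔsp
  -- the candidate f = G (p m)
  have hf_mem : G (p m) ∈ Wlt P (m + 2) := hGmap m _ hpm_mem
  have hΔf : Δ (G (p m)) = p m := hGinv _ (Wlt_le_Wtot P _ hpm_mem)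
  -- f - s (m+1) ∈ Wlt P (m+1)
  have hd_mem : G (p m) - s (m + 1) ∈ Wlt P (m + 1) := by
    set d := G (p m) - s (m + 1) with hd
    have hdW : d ∈ Wlt P (m + 2) := Submodule.sub_mem _ hf_mem hs_mem
    have hΔd : Δ d ∈ Wlt P m := by
      have : Δ d = -(Δ (s (m + 1)) - p m) := by rw [hd, map_sub, hΔf]; abel
      rw [this]; exact Submodule.neg_mem _ hΔsp
    have hu : G (Δ d) ∈ Wlt P (m + 1) := by
      cases m with
      | zero =>
        have : Δ d = 0 := by rw [hWbot] at hΔd; simpa using hΔd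
        rw [this, map_zero]; exact Submodule.zero_mem _
      | succ k => exact hGmap k _ hΔd
    have hdu : d - G (Δ d) ∈ Wlt P 1 :=
      ker_lemma P hP Δ hΔ0 hΔsucc (m + 1) _
        (Submodule.sub_mem _ hdW (Wlt_mono P (by omega) hu))
        (by rw [map_sub, hGinv _ (Wlt_le_Wtot P m hΔd), sub_self])
    have : d = (d - G (Δ d)) + G (Δ d) := by abel
    rw [this]
    exact Submodule.add_mem _ (Wlt_mono P (by omega) hdu) hu
  -- Sobolev minimality against f
  have hSorth : ∀ w ∈ Wlt P (m + 1),
      ⟪s (m + 1), w⟫ + χ * ⟪Δ (s (m + 1)), Δ w⟫ = 0 := fun w hw => hsortho (m + 1) w hw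
  have hSmin : ‖s (m + 1)‖ ^ 2 + χ * ‖Δ (s (m + 1))‖ ^ 2 ≤
      ‖G (p m)‖ ^ 2 + χ * ‖Δ (G (p m))‖ ^ 2 := min_normS hχ.le hSorth hd_mem
  rw [hΔf] at hSmin
  have hGb : ‖G (p m)‖ ≤ C * ‖p m‖ := hGbound _ (Wlt_le_Wtot P _ hpm_mem)
  have hGb2 : ‖G (p m)‖ ^ 2 ≤ (C * ‖p m‖) ^ 2 :=
    pow_le_pow_left₀ (norm_nonneg _) hGb 2
  -- fact 4 : Sobolev upper bound
  have fact4 : ‖s (m + 1)‖ ^ 2 + χ * ‖Δ (s (m + 1))‖ ^ 2 ≤ (C ^ 2 + χ) * ‖p m‖ ^ 2 := by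
    nlinarith [hSmin, hGb2]
  -- fact 2 : ‖s (m+1)‖ ≤ C ‖p m‖
  have fact2 : ‖s (m + 1)‖ ≤ C * ‖p m‖ := by
    have hsq : ‖s (m + 1)‖ ^ 2 ≤ (C * ‖p m‖) ^ 2 := by
      nlinarith [hSmin, hGb2, factΔ, norm_nonneg (p m), norm_nonneg (Δ (s (m + 1))),
        mul_le_mul_of_nonneg_left (mul_le_mul factΔ factΔ (norm_nonneg _) (norm_nonneg _)) hχ.le]
    have := Real.sqrt_le_sqrt hsq
    rwa [Real.sqrt_sq (norm_nonneg _), Real.sqrt_sq (by positivity)] at this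
  -- ‖s‖² = ⟪G s, Δ s⟫
  have hW1 : Wlt P 1 = Submodule.span ℝ {P 0} := by
    have : Set.Iio 1 = ({0} : Set ℕ) := by ext i; simp
    rw [Wlt, this, Set.image_singleton]
  have hsP0 : ⟪s (m + 1), P 0⟫ = 0 := by
    have h := hsortho (m + 1) (P 0) (memP P (by omega))
    simp only [innerS] at h
    rw [hΔ0, inner_zero_right] at h
    simpa using h
  have hker : s (m + 1) - G (Δ (s (m + 1))) ∈ Wlt P 1 := by
    apply ker_lemma P hP Δ hΔ0 hΔsucc (m + 2) _ ?_ ?_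
    · exact Submodule.sub_mem _ (Wlt_mono P (by omega) hs_mem)
        (Wlt_mono P (by omega) (hGmap m _ hΔs_mem))
    · rw [map_sub, hGinv _ (Wlt_le_Wtot P _ hΔs_mem), sub_self]
  have hss : ‖s (m + 1)‖ ^ 2 = ⟪G (s (m + 1)), Δ (s (m + 1))⟫ := by
    obtain ⟨a, ha⟩ := Submodule.mem_span_singleton.mp (hW1 ▸ hker)
    have h1 : ⟪s (m + 1), s (m + 1) - G (Δ (s (m + 1)))⟫ = 0 := by
      rw [← ha, real_inner_smul_right, hsP0, mul_zero]
    have h2 : ⟪s (m + 1), G (Δ (s (m + 1)))⟫ = ⟪G (s (m + 1)), Δ (s (m + 1))⟫ :=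
      (hGsym _ (Wlt_le_Wtot P _ hs_mem) _ (Wlt_le_Wtot P _ hΔs_mem)).symm
    rw [inner_sub_right] at h1
    rw [← real_inner_self_eq_norm_sq, ← h2]
    linarith
  -- ‖p (m+1)‖ ≤ C ‖Δ s (m+1)‖
  have hpCΔ : ‖p (m + 1)‖ ≤ C * ‖Δ (s (m + 1))‖ := by
    have hGs : ‖G (s (m + 1))‖ ≤ C * ‖s (m + 1)‖ := hGbound _ (Wlt_le_Wtot P _ hs_mem)
    have hcs : ⟪G (s (m + 1)), Δ (s (m + 1))⟫ ≤ ‖G (s (m + 1))‖ * ‖Δ (s (m + 1))‖ :=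
      real_inner_le_norm _ _
    have hss2 : ‖s (m + 1)‖ ^ 2 ≤ C * ‖s (m + 1)‖ * ‖Δ (s (m + 1))‖ := by
      rw [hss]
      calc ⟪G (s (m + 1)), Δ (s (m + 1))⟫ ≤ ‖G (s (m + 1))‖ * ‖Δ (s (m + 1))‖ := hcs
        _ ≤ C * ‖s (m + 1)‖ * ‖Δ (s (m + 1))‖ :=
          mul_le_mul_of_nonneg_right hGs (norm_nonneg _)
    rcases eq_or_lt_of_le (norm_nonneg (s (m + 1))) with h0 | h0
    · have : ‖p (m + 1)‖ ≤ 0 := by rw [h0]; exact fact1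
      have hle : ‖p (m + 1)‖ = 0 := le_antisymm this (norm_nonneg _)
      rw [hle]; positivity
    · have : ‖s (m + 1)‖ ≤ C * ‖Δ (s (m + 1))‖ := by
        nlinarith [hss2, h0]
      linarith
  -- fact 3 : Sobolev lower bound
  have fact3 : (1 + χ * C⁻¹ ^ 2) * ‖p (m + 1)‖ ^ 2 ≤
      ‖s (m + 1)‖ ^ 2 + χ * ‖Δ (s (m + 1))‖ ^ 2 := by
    have h1 : ‖p (m + 1)‖ ^ 2 ≤ ‖s (m + 1)‖ ^ 2 :=
      pow_le_pow_left₀ (norm_nonneg _) fact1 2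
    have h2 : ‖p (m + 1)‖ ^ 2 ≤ (C * ‖Δ (s (m + 1))‖) ^ 2 :=
      pow_le_pow_left₀ (norm_nonneg _) hpCΔ 2
    have hinv : C * C⁻¹ = 1 := mul_inv_cancel₀ hC.ne'
    have h3 : C⁻¹ ^ 2 * ‖p (m + 1)‖ ^ 2 ≤ ‖Δ (s (m + 1))‖ ^ 2 := by
      have h2' : ‖p (m + 1)‖ ^ 2 ≤ C ^ 2 * ‖Δ (s (m + 1))‖ ^ 2 := by
        rw [← mul_pow]; exact h2
      calc C⁻¹ ^ 2 * ‖p (m + 1)‖ ^ 2 ≤ C⁻¹ ^ 2 * (C ^ 2 * ‖Δ (s (m + 1))‖ ^ 2) :=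
            mul_le_mul_of_nonneg_left h2' (by positivity)
        _ = (C⁻¹ * C) ^ 2 * ‖Δ (s (m + 1))‖ ^ 2 := by ring
        _ = ‖Δ (s (m + 1))‖ ^ 2 := by rw [inv_mul_cancel₀ hC.ne']; ring
    nlinarith [h1, mul_le_mul_of_nonneg_left h3 hχ.le]
  exact ⟨fact1, fact2, fact3, fact4⟩
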